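/- arXiv:1901.03509 — 2 statements merged into one kernel-verified Lean document; each statement's English description precedes it below -/
import Mathlib

section
/- Let H be a real inner product space, L : H →ₗ[ℝ] H a symmetric linear map, and φ ∈ H, Λ ∈ ℝ with L φ = Λ • φ. Let f ∈ H with ⟪f, φ⟫ > 0 and let u : ℝ → H be a family such that L (u σ) = σ • (u σ) + f for every σ ≠ Λ. Then ⟪u σ, φ⟫ → +∞ as σ → Λ from the left (i.e. Tendsto (fun σ => ⟪u σ, φ⟫) (𝓝[<] Λ) atTop) and ⟪u σ, φ⟫ → -∞ as σ → Λ from the right (i.e. Tendsto (fun σ => ⟪u σ, φ⟫) (𝓝[>] Λ) atBot). -/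
open RealInnerProductSpace Filter

theorem blow_up_of_component
    {H : Type*} [NormedAddCommGroup H] [InnerProductSpace ℝ H]
    (L : H →ₗ[ℝ] H) (hsym : ∀ x y : H, ⟪L x, y⟫ = ⟪x, L y⟫)
    (φ : H) (Λ : ℝ) (hφ : L φ = Λ • φ)
    (f : H) (hf : ⟪f, φ⟫ > 0)
    (u : ℝ → H) (hu : ∀ σ : ℝ, σ ≠ Λ → L (u σ) = σ • (u σ) + f) :
    Tendsto (fun σ => ⟪u σ, φ⟫) (nhdsWithin Λ (Set.Iio Λ)) atTop ∧
    Tendsto (fun σ => ⟪u σ, φ⟫) (nhdsWithin Λ (Set.Ioi Λ)) atBot := by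
  have key : ∀ σ : ℝ, σ ≠ Λ → ⟪u σ, φ⟫ = ⟪f, φ⟫ * (Λ - σ)⁻¹ := by
    intro σ hσ
    have h1 : ⟪L (u σ), φ⟫ = Λ * ⟪u σ, φ⟫ := by
      rw [hsym, hφ, real_inner_smul_right]
    have h2 : ⟪L (u σ), φ⟫ = σ * ⟪u σ, φ⟫ + ⟪f, φ⟫ := by
      rw [hu σ hσ, inner_add_left, real_inner_smul_left]
    have h3 : (Λ - σ) * ⟪u σ, φ⟫ = ⟪f, φ⟫ := by nlinarith [h1, h2]
    field_simp [sub_ne_zero.mpr (Ne.symm hσ)]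
    linarith [h3]
  have hinvL : Tendsto (fun σ : ℝ => (Λ - σ)⁻¹) (nhdsWithin Λ (Set.Iio Λ)) atTop := by
    apply tendsto_inv_nhdsGT_zero.comp
    apply tendsto_nhdsWithin_of_tendsto_nhds_of_eventually_within
    · have h : Tendsto (fun σ : ℝ => Λ - σ) (nhds Λ) (nhds (Λ - Λ)) :=
        (tendsto_const_nhds.sub tendsto_id)
      simpa using h.mono_left nhdsWithin_le_nhds
    · filter_upwards [self_mem_nhdsWithin] with σ hσ
      exact sub_pos.mpr (Set.mem_Iio.mp hσ)
  have hinvR : Tendsto (fun σ : ℝ => (Λ - σ)⁻¹) (nhdsWithin Λ (Set.Ioi Λ)) atBot := by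
    have : Tendsto (fun σ : ℝ => (σ - Λ)⁻¹) (nhdsWithin Λ (Set.Ioi Λ)) atTop := by
      apply tendsto_inv_nhdsGT_zero.comp
      apply tendsto_nhdsWithin_of_tendsto_nhds_of_eventually_within
      · have h : Tendsto (fun σ : ℝ => σ - Λ) (nhds Λ) (nhds (Λ - Λ)) :=
          (tendsto_id.sub tendsto_const_nhds)
        simpa using h.mono_left nhdsWithin_le_nhds
      · filter_upwards [self_mem_nhdsWithin] with σ hσ
        exact sub_pos.mpr (Set.mem_Ioi.mp hσ)
    have h2 := tendsto_neg_atTop_atBot.comp this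
    refine h2.congr fun σ => ?_
    simp [neg_inv, neg_sub]
  have hneL : ∀ᶠ σ in nhdsWithin Λ (Set.Iio Λ), ⟪u σ, φ⟫ = ⟪f, φ⟫ * (Λ - σ)⁻¹ := by
    filter_upwards [self_mem_nhdsWithin] with σ hσ
    exact key σ (ne_of_lt hσ)
  have hneR : ∀ᶠ σ in nhdsWithin Λ (Set.Ioi Λ), ⟪u σ, φ⟫ = ⟪f, φ⟫ * (Λ - σ)⁻¹ := by
    filter_upwards [self_mem_nhdsWithin] with σ hσ
    exact key σ (ne_of_gt hσ)
  constructor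
  · exact (Tendsto.const_mul_atTop hf hinvL).congr' (hneL.mono fun σ h => h.symm)
  · exact (Tendsto.const_mul_atBot hf hinvR).congr' (hneR.mono fun σ h => h.symm)
end

section
/- Let H be a real inner product space, L : H →ₗ[ℝ] H a symmetric linear map, and φ ∈ H, Λ ∈ ℝ with L φ = Λ • φ. Let u₁, u₂, f₁, f₂ ∈ H and μ ∈ ℝ satisfy L u₁ = a•u₁ + b•u₂ + μ•u₁ + f₁ and L u₂ = c•u₁ + d•u₂ + μ•u₂ + f₂, where b ≠ 0, a ≠ d, (a-d)² + 4·b·c = 0, ξ = (a+d)/2, ν = Λ - ξ, and assume μ ≠ ν. Define ũ₁ = (-2/(a-d))•u₂, ũ₂ = ((a-d)/(2b))•u₁ + u₂, f̃₁ = (-2/(a-d))•f₂ and f̃₂ = ((a-d)/(2b))•f₁ + f₂. Then ⟪ũ₂, φ⟫ = ⟪f̃₂, φ⟫/(ν - μ) and ⟪ũ₁, φ⟫ = ⟪f̃₁, φ⟫/(ν - μ) + ⟪f̃₂, φ⟫/(ν - μ)²; in particular u₂ satisfies ⟪u₂, φ⟫ = ((d-a)/2)·⟪ũ₁, φ⟫.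 -/
open RealInnerProductSpace

theorem component_formula_double_eigenvalue
    {H : Type*} [NormedAddCommGroup H] [InnerProductSpace ℝ H]
    (L : H →ₗ[ℝ] H) (hsym : ∀ x y : H, ⟪L x, y⟫ = ⟪x, L y⟫)
    (φ : H) (Λ : ℝ) (hφ : L φ = Λ • φ)
    (a b c d μ : ℝ) (u₁ u₂ f₁ f₂ : H)
    (h₁ : L u₁ = a • u₁ + b • u₂ + μ • u₁ + f₁)
    (h₂ : L u₂ = c • u₁ + d • u₂ + μ • u₂ + f₂)
    (hb : b ≠ 0) (had : a ≠ d) (hD : (a - d) ^ 2 + 4 * b * c = 0)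
    (ξ ν : ℝ) (hξ : ξ = (a + d) / 2) (hν : ν = Λ - ξ) (hμ : μ ≠ ν)
    (tu₁ tu₂ tf₁ tf₂ : H)
    (htu₁ : tu₁ = (-2 / (a - d)) • u₂)
    (htu₂ : tu₂ = ((a - d) / (2 * b)) • u₁ + u₂)
    (htf₁ : tf₁ = (-2 / (a - d)) • f₂)
    (htf₂ : tf₂ = ((a - d) / (2 * b)) • f₁ + f₂) :
    ⟪tu₂, φ⟫ = ⟪tf₂, φ⟫ / (ν - μ) ∧
    ⟪tu₁, φ⟫ = ⟪tf₁, φ⟫ / (ν - μ) + ⟪tf₂, φ⟫ / (ν - μ) ^ 2 ∧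
    ⟪u₂, φ⟫ = ((d - a) / 2) * ⟪tu₁, φ⟫ := by
  have had' : a - d ≠ 0 := sub_ne_zero.mpr had
  have hνμ : ν - μ ≠ 0 := sub_ne_zero.mpr (Ne.symm hμ)
  have hΛ : Λ = ν + (a + d) / 2 := by rw [hν, hξ]; ring
  set x := ⟪u₁, φ⟫ with hx
  set y := ⟪u₂, φ⟫ with hy
  set g₁ := ⟪f₁, φ⟫ with hg₁
  set g₂ := ⟪f₂, φ⟫ with hg₂
  have e1 : Λ * x = a * x + b * y + μ * x + g₁ := by
    have h := hsym u₁ φ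
    rw [h₁, hφ] at h
    simpa [inner_add_left, real_inner_smul_left, real_inner_smul_right,
      mul_comm] using h.symm
  have e2 : Λ * y = c * x + d * y + μ * y + g₂ := by
    have h := hsym u₂ φ
    rw [h₂, hφ] at h
    simpa [inner_add_left, real_inner_smul_left, real_inner_smul_right,
      mul_comm] using h.symm
  rw [hΛ] at e1 e2
  have e1' : (ν - μ) * x = (a - d) / 2 * x + b * y + g₁ := by linear_combination e1
  have e2' : (ν - μ) * y = c * x + (d - a) / 2 * y + g₂ := by linear_combination e2
  have k1 : (ν - μ) * ((a - d) * x + 2 * b * y) = (a - d) * g₁ + 2 * b * g₂ := by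
    linear_combination (a - d) * e1' + 2 * b * e2' + (x / 2) * hD
  have k2 : (ν - μ) ^ 2 * (4 * b * y) =
      (ν - μ) * (4 * b * g₂) - (a - d) * ((a - d) * g₁ + 2 * b * g₂) := by
    linear_combination 4 * b * (ν - μ) * e2' - (a - d) * k1 + (ν - μ) * x * hD
  have h4b : (4 * b) * (ν - μ) ^ 2 ≠ 0 := by positivity
  have hy2 : y = ((ν - μ) * (4 * b * g₂) - (a - d) * ((a - d) * g₁ + 2 * b * g₂)) /
      ((4 * b) * (ν - μ) ^ 2) := by
    rw [eq_div_iff h4b]; linear_combination k2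
  rw [htu₁, htu₂, htf₁, htf₂]
  simp only [inner_add_left, real_inner_smul_left, ← hx, ← hy, ← hg₁, ← hg₂]
  refine ⟨?_, ?_, ?_⟩
  · rw [eq_div_iff hνμ]
    field_simp
    linear_combination k1
  · rw [hy2]
    field_simp
    ring
  · field_simp
    ring
end
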